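/- For the rhombic medium symbol A(η) = [[(τ₁−μ)η₁²+μ, (λ+μ)η₁η₂],[(λ+μ)η₁η₂, (τ₂−μ)η₂²+μ]] with τ₁, τ₂, μ > 0 and −2μ−√(τ₁τ₂) < λ < √(τ₁τ₂), the matrix A(η) is positive definite for every η ∈ S¹. -/

import Mathlib

open Matrix

lemma posDef_fin_two_aux {a b c : ℝ} (ha : 0 < a) (hd : 0 < a * c - b ^ 2) :
    (!![a, b; b, c] : Matrix (Fin 2) (Fin 2) ℝ).PosDef := by
  rw [posDef_iff_dotProduct_mulVec]
  constructor
  · ext i j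
    fin_cases i <;> fin_cases j <;> simp [conjTranspose_apply]
  · intro x hx
    have hx' : x 0 ≠ 0 ∨ x 1 ≠ 0 := by
      by_contra h
      push_neg at h
      exact hx (funext fun i => by fin_cases i <;> simp [h.1, h.2])
    have key : dotProduct (star x) ((!![a, b; b, c] : Matrix (Fin 2) (Fin 2) ℝ) *ᵥ x)
        = a * (x 0) ^ 2 + 2 * b * (x 0) * (x 1) + c * (x 1) ^ 2 := by
      simp [dotProduct, mulVec, Fin.sum_univ_two, Matrix.cons_val_zero, Matrix.cons_val_one]
      ring
    rw [key]
    rcases hx' with h0 | h1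
    · rcases eq_or_ne (x 1) 0 with h1 | h1
      · have : 0 < (x 0) ^ 2 := by positivity
        rw [h1]; nlinarith
      · have h1' : 0 < (x 1) ^ 2 := by positivity
        nlinarith [sq_nonneg (a * x 0 + b * x 1), mul_pos hd h1']
    · have h1' : 0 < (x 1) ^ 2 := by positivity
      nlinarith [sq_nonneg (a * x 0 + b * x 1), mul_pos hd h1']

/-- The rhombic medium symbol `A(η)` is positive definite for every `η ∈ S¹`. -/
theorem rhombic_symbol_posDef
    (τ₁ τ₂ μ lam : ℝ) (hτ₁ : 0 < τ₁) (hτ₂ : 0 < τ₂) (hμ : 0 < μ)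
    (hlaml : -2 * μ - Real.sqrt (τ₁ * τ₂) < lam) (hlamu : lam < Real.sqrt (τ₁ * τ₂))
    (η₁ η₂ : ℝ) (hη : η₁ ^ 2 + η₂ ^ 2 = 1) :
    (!![(τ₁ - μ) * η₁ ^ 2 + μ, (lam + μ) * η₁ * η₂;
        (lam + μ) * η₁ * η₂, (τ₂ - μ) * η₂ ^ 2 + μ] : Matrix (Fin 2) (Fin 2) ℝ).PosDef := by
  set a := Real.sqrt τ₁ with ha
  set b := Real.sqrt τ₂ with hb
  have ha2 : a ^ 2 = τ₁ := Real.sq_sqrt hτ₁.le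
  have hb2 : b ^ 2 = τ₂ := Real.sq_sqrt hτ₂.le
  have hab : a * b = Real.sqrt (τ₁ * τ₂) := (Real.sqrt_mul hτ₁.le τ₂).symm
  have ha0 : 0 < a := Real.sqrt_pos.mpr hτ₁
  have hb0 : 0 < b := Real.sqrt_pos.mpr hτ₂
  have hP : 0 < (a * b - lam) * (lam + 2 * μ + a * b) := by
    apply mul_pos <;> rw [hab] <;> linarith
  apply posDef_fin_two_aux
  · -- diagonal entry positive
    rcases le_total τ₁ μ with h | h
    · nlinarith [sq_nonneg η₂]
    · nlinarith [sq_nonneg η₁]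
  · -- determinant positive
    have key : ((τ₁ - μ) * η₁ ^ 2 + μ) * ((τ₂ - μ) * η₂ ^ 2 + μ) - ((lam + μ) * η₁ * η₂) ^ 2
        = (a * b - lam) * (lam + 2 * μ + a * b) * (η₁ * η₂) ^ 2
          + μ * (a * η₁ ^ 2 - b * η₂ ^ 2) ^ 2 := by
      linear_combination
        (-(μ * (τ₁ * η₁ ^ 2 + μ * η₂ ^ 2 + τ₂ * η₂ ^ 2 + μ * η₁ ^ 2))
          + μ ^ 2 * (η₁ ^ 2 + η₂ ^ 2 - 1)) * hη
        + (-(τ₂ * η₁ ^ 2 * η₂ ^ 2 + μ * η₁ ^ 4)) * ha2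
        + (-(a ^ 2 * η₁ ^ 2 * η₂ ^ 2 + μ * η₂ ^ 4)) * hb2
    rw [key]
    rcases eq_or_ne (η₁ * η₂) 0 with h | h
    · rcases mul_eq_zero.mp h with h0 | h0
      · have hη2 : η₂ ^ 2 = 1 := by rw [h0] at hη; linarith
        rw [h0]
        have e : (a * (0 : ℝ) ^ 2 - b * η₂ ^ 2) ^ 2 = b ^ 2 := by
          have h' : (a * (0 : ℝ) ^ 2 - b * η₂ ^ 2) ^ 2 = b ^ 2 * (η₂ ^ 2) ^ 2 := by ring
          rw [h', hη2]; ring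
        nlinarith [e, mul_pos hμ (mul_pos hb0 hb0)]
      · have hη1 : η₁ ^ 2 = 1 := by rw [h0] at hη; linarith
        rw [h0]
        have e : (a * η₁ ^ 2 - b * (0 : ℝ) ^ 2) ^ 2 = a ^ 2 := by
          have h' : (a * η₁ ^ 2 - b * (0 : ℝ) ^ 2) ^ 2 = a ^ 2 * (η₁ ^ 2) ^ 2 := by ring
          rw [h', hη1]; ring
        nlinarith [e, mul_pos hμ (mul_pos ha0 ha0)]
    · have h2 : 0 < (η₁ * η₂) ^ 2 := by positivity
      have := mul_pos hP h2
      nlinarith [mul_nonneg hμ.le (sq_nonneg (a * η₁ ^ 2 - b * η₂ ^ 2))]
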